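/- The inverse Cauchy transform of the semicircle distribution with mean m and variance σ², given by G⁻¹(z) = m + σ²z + 1/z, is a bijection from the open lower half-plane ℂ⁻ onto the set ℂ⁺ ∪ (m−2σ, m+2σ) ∪ ℂ⁻. -/

import Mathlib

open Complex Set

lemma imF (m σ : ℝ) (z : ℂ) :
    ((m : ℂ) + (σ ^ 2 : ℝ) * z + 1 / z).im = z.im * (σ^2 - 1 / Complex.normSq z) := by
  simp [Complex.add_im, Complex.mul_im, Complex.div_im, ← Complex.ofReal_pow]
  ring

lemma reF (m σ : ℝ) (z : ℂ) :
    ((m : ℂ) + (σ ^ 2 : ℝ) * z + 1 / z).re = m + σ^2 * z.re + z.re / Complex.normSq z := by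
  simp [Complex.add_re, Complex.mul_re, Complex.div_re, ← Complex.ofReal_pow]

theorem semicircle_inverse_cauchy_bijOn (m σ : ℝ) (hσ : 0 < σ) :
    Set.BijOn (fun z : ℂ => (m : ℂ) + (σ ^ 2 : ℝ) * z + 1 / z)
      {z : ℂ | z.im < 0}
      ({z : ℂ | 0 < z.im} ∪
        {z : ℂ | z.im = 0 ∧ m - 2 * σ < z.re ∧ z.re < m + 2 * σ} ∪
        {z : ℂ | z.im < 0}) := by
  have hσ2 : (0:ℝ) < σ^2 := by positivity
  have hσc : ((σ:ℂ))^2 ≠ 0 := pow_ne_zero _ (Complex.ofReal_ne_zero.mpr hσ.ne')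
  refine ⟨?_, ?_, ?_⟩
  · -- MapsTo
    intro z hz
    simp only [Set.mem_setOf_eq] at hz
    have hz0 : z ≠ 0 := fun h => by simp [h] at hz
    have hN : 0 < Complex.normSq z := Complex.normSq_pos.mpr hz0
    rcases lt_trichotomy (σ^2 * Complex.normSq z) 1 with h | h | h
    · left; left
      simp only [Set.mem_setOf_eq, imF]
      have : σ^2 - 1 / Complex.normSq z < 0 := by
        rw [sub_neg, lt_div_iff₀ hN]; linarith
      nlinarith
    · left; right
      simp only [Set.mem_setOf_eq, imF, reF]
      refine ⟨?_, ?_, ?_⟩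
      · have : σ^2 - 1 / Complex.normSq z = 0 := by
          field_simp; linarith
        rw [this, mul_zero]
      all_goals {
        have hxN : z.re / Complex.normSq z = σ^2 * z.re := by
          rw [div_eq_iff hN.ne']; linear_combination -z.re * h
        rw [hxN]
        have hx2 : z.re^2 < Complex.normSq z := by
          rw [Complex.normSq_apply]; nlinarith [hz]
        have hb : (σ * z.re)^2 < 1 := by nlinarith
        nlinarith [hb, hσ, sq_nonneg (σ * z.re - 1), sq_nonneg (σ * z.re + 1)] }
    · right
      simp only [Set.mem_setOf_eq, imF]
      have : 0 < σ^2 - 1 / Complex.normSq z := by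
        rw [sub_pos, div_lt_iff₀ hN]; linarith
      nlinarith
  · -- InjOn
    intro z₁ h₁ z₂ h₂ h
    simp only [Set.mem_setOf_eq] at h₁ h₂
    simp only at h
    have hz₁ : z₁ ≠ 0 := fun hh => by simp [hh] at h₁
    have hz₂ : z₂ ≠ 0 := fun hh => by simp [hh] at h₂
    by_contra hne
    have key : ((σ:ℂ))^2 * z₁ * z₂ = 1 := by
      have h' : (z₁ - z₂) * (((σ:ℂ))^2 * z₁ * z₂ - 1) = 0 := by
        field_simp at h
        push_cast at h
        linear_combination h
      rcases mul_eq_zero.mp h' with h'' | h''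
      · exact absurd (sub_eq_zero.mp h'') hne
      · exact sub_eq_zero.mp h''
    have hz2eq : z₂ = (((σ:ℂ))^2 * z₁)⁻¹ := eq_inv_of_mul_eq_one_right key
    have hpos : 0 < z₂.im := by
      rw [hz2eq, Complex.inv_im]
      have him : (((σ:ℂ))^2 * z₁).im = σ^2 * z₁.im := by
        simp [Complex.mul_im, ← Complex.ofReal_pow]
      rw [him]
      have hNp : 0 < Complex.normSq (((σ:ℂ))^2 * z₁) :=
        Complex.normSq_pos.mpr (mul_ne_zero hσc hz₁)
      apply div_pos (by nlinarith) hNp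
    linarith
  · -- SurjOn
    intro w hw
    obtain ⟨s, hs⟩ := IsAlgClosed.exists_pow_nat_eq ((w - m)^2 - 4*(σ:ℂ)^2) zero_lt_two
    set a : ℂ := w - m with ha
    set zp : ℂ := (a + s) / (2 * (σ:ℂ)^2) with hzp
    set zm : ℂ := (a - s) / (2 * (σ:ℂ)^2) with hzm
    have hprod : zp * zm * (σ:ℂ)^2 = 1 := by
      rw [hzp, hzm]
      field_simp [Complex.ofReal_ne_zero.mpr hσ.ne']
      linear_combination (-1:ℂ) * hs
    have hzp0 : zp ≠ 0 := by
      intro hh; rw [hh, zero_mul, zero_mul] at hprod; exact zero_ne_one hprod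
    have hzm0 : zm ≠ 0 := by
      intro hh; rw [hh, mul_zero, zero_mul] at hprod; exact zero_ne_one hprod
    have hqp : (σ:ℂ)^2 * zp^2 - a * zp + 1 = 0 := by
      rw [hzp]; field_simp [Complex.ofReal_ne_zero.mpr hσ.ne']
      linear_combination hs
    have hqm : (σ:ℂ)^2 * zm^2 - a * zm + 1 = 0 := by
      rw [hzm]; field_simp [Complex.ofReal_ne_zero.mpr hσ.ne']
      linear_combination hs
    have hFp : (m:ℂ) + (σ^2:ℝ) * zp + 1 / zp = w := by
      apply mul_right_cancel₀ hzp0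
      rw [add_mul, add_mul, one_div, inv_mul_cancel₀ hzp0]
      push_cast
      linear_combination hqp
    have hFm : (m:ℂ) + (σ^2:ℝ) * zm + 1 / zm = w := by
      apply mul_right_cancel₀ hzm0
      rw [add_mul, add_mul, one_div, inv_mul_cancel₀ hzm0]
      push_cast
      linear_combination hqm
    rcases lt_trichotomy zp.im 0 with h | h | h
    · exact ⟨zp, h, hFp⟩
    · -- zp real: contradiction
      exfalso
      have hwim : w.im = 0 := by
        rw [← hFp, imF, h, zero_mul]
      have hbounds : m - 2*σ < w.re ∧ w.re < m + 2*σ := by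
        rcases hw with (hw | hw) | hw
        · simp only [Set.mem_setOf_eq] at hw; linarith [hw]
        · exact hw.2
        · simp only [Set.mem_setOf_eq] at hw; linarith [hw]
      set x := zp.re with hx
      have hx0 : x ≠ 0 := fun hh =>
        hzp0 (Complex.ext (by simpa using hh) (by simpa using h))
      have hNzp : Complex.normSq zp = x^2 := by
        rw [Complex.normSq_apply, h]; ring
      have hwre : w.re = m + σ^2 * x + x / x^2 := by
        rw [← hFp, reF, hNzp]
      have h1 : x * (w.re - m) = σ^2 * x^2 + 1 := by
        rw [hwre]; field_simp; ring
      rcases lt_or_gt_of_ne hx0 with hxneg | hxpos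
      · nlinarith [sq_nonneg (σ * x + 1), hbounds.1]
      · nlinarith [sq_nonneg (σ * x - 1), hbounds.2]
    · -- use zm
      refine ⟨zm, ?_, hFm⟩
      simp only [Set.mem_setOf_eq]
      have hzmeq : zm = ((σ:ℂ)^2 * zp)⁻¹ :=
        eq_inv_of_mul_eq_one_right (by linear_combination hprod)
      rw [hzmeq, Complex.inv_im]
      have him : (((σ:ℂ))^2 * zp).im = σ^2 * zp.im := by
        simp [Complex.mul_im, ← Complex.ofReal_pow]
      rw [him]
      have hNp : 0 < Complex.normSq (((σ:ℂ))^2 * zp) :=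
        Complex.normSq_pos.mpr (mul_ne_zero hσc hzp0)
      exact div_neg_of_neg_of_pos (by nlinarith) hNp
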